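/- In the unweighted case p_{ij} = 1/2 for all i ≠ j, the eigenvalue β := 1 − (1 − cos(π/n))/(n − 1) of K has multiplicity at least n − 1. Specifically, the n eigenvectors f_1, …, f_n given by f_i(x) := cos((2·pos_i(x) − 1)π/(2n)) (where pos_i(x) is the position of label i in x) satisfy f_1 + ⋯ + f_n = 0, while any n − 1 of them are linearly independent. -/
import Mathlib


open Finset

/-- Off-diagonal entries of the adjacent-transposition chain: `Koff n p x y = p_{ji}/(n-1)`
if `y` is obtained from `x` by swapping the entries in (0-based) positions `r-1` and `r`
for some `1 ≤ r ≤ n-1`, and `0` otherwise. Here `x r` is the entry in position `r`. -/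
noncomputable def Koff (n : ℕ) (p : Fin n → Fin n → ℝ)
    (x y : Equiv.Perm (Fin n)) : ℝ :=
  ∑ r : Fin n,
    if 1 ≤ (r : ℕ) ∧
        y = x * Equiv.swap (⟨(r : ℕ) - 1, Nat.lt_of_le_of_lt (Nat.sub_le _ _) r.isLt⟩ : Fin n) r
    then p (x r) (x ⟨(r : ℕ) - 1, Nat.lt_of_le_of_lt (Nat.sub_le _ _) r.isLt⟩) / ((n : ℝ) - 1)
    else 0

/-- The transition matrix `K` of the adjacent-transposition chain on permutations. -/
noncomputable def Kmat (n : ℕ) (p : Fin n → Fin n → ℝ) :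
    Matrix (Equiv.Perm (Fin n)) (Equiv.Perm (Fin n)) ℝ :=
  Matrix.of fun x y =>
    if x = y then 1 - ∑ z ∈ Finset.univ.erase x, Koff n p x z
    else Koff n p x y

/-- Unnormalized stationary weight `∏_{r<s} p_{x_r,x_s}`. -/
noncomputable def piUn (n : ℕ) (p : Fin n → Fin n → ℝ) (x : Equiv.Perm (Fin n)) : ℝ :=
  ∏ rs ∈ Finset.univ.filter (fun rs : Fin n × Fin n => rs.1 < rs.2), p (x rs.1) (x rs.2)

/-- The stationary distribution `π`. -/
noncomputable def piDist (n : ℕ) (p : Fin n → Fin n → ℝ) (x : Equiv.Perm (Fin n)) : ℝ :=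
  (∑ y : Equiv.Perm (Fin n), piUn n p y)⁻¹ * piUn n p x

/-- The function `f_i` on permutations: `f_i(x) = cos((2·pos_i(x) - 1)π/(2n))`, where
`pos_i(x) ∈ {1, ..., n}` is the (1-based) position of label `i` in `x`. -/
noncomputable def fvec (n : ℕ) (i : Fin n) (x : Equiv.Perm (Fin n)) : ℝ :=
  Real.cos ((2 * (((x.symm i : ℕ) + 1 : ℕ) : ℝ) - 1) * Real.pi / (2 * n))

noncomputable def Wr (n : ℕ) (t : ℝ) : ℝ := Real.cos ((2*t+1) * Real.pi / (2*n))

lemma Wr_rec (n : ℕ) (hn : (n:ℝ) ≠ 0) (t : ℝ) :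
    Wr n (t-1) + Wr n (t+1) = 2 * Real.cos (Real.pi / n) * Wr n t := by
  unfold Wr
  have h1 : (2*(t-1)+1) * Real.pi / (2*n) = (2*t+1)*Real.pi/(2*(n:ℝ)) - Real.pi/n := by
    field_simp; ring
  have h2 : (2*(t+1)+1) * Real.pi / (2*n) = (2*t+1)*Real.pi/(2*(n:ℝ)) + Real.pi/n := by
    field_simp; ring
  rw [h1, h2, Real.cos_sub, Real.cos_add]; ring

lemma Wr_neg_one (n : ℕ) : Wr n (-1) = Wr n 0 := by
  unfold Wr
  rw [show (2*(-1:ℝ)+1) * Real.pi/(2*(n:ℝ)) = -((2*0+1)*Real.pi/(2*(n:ℝ))) by ring,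
    Real.cos_neg]

lemma Wr_top (n : ℕ) (hn : (n:ℝ) ≠ 0) : Wr n (((n:ℝ)-1)+1) = Wr n ((n:ℝ)-1) := by
  unfold Wr
  have h1 : (2*(((n:ℝ)-1)+1)+1)*Real.pi/(2*(n:ℝ)) = Real.pi - (-(Real.pi/(2*n))) := by
    field_simp; ring
  have h2 : (2*((n:ℝ)-1)+1)*Real.pi/(2*(n:ℝ)) = Real.pi - Real.pi/(2*n) := by
    field_simp; ring
  rw [h1, h2, Real.cos_pi_sub, Real.cos_pi_sub, Real.cos_neg]

lemma fvec_eq (n : ℕ) (i : Fin n) (x : Equiv.Perm (Fin n)) :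
    fvec n i x = Wr n ((x.symm i : ℕ) : ℝ) := by
  unfold fvec Wr
  congr 1
  push_cast
  ring

def pred' (n : ℕ) (r : Fin n) : Fin n :=
  ⟨(r : ℕ) - 1, Nat.lt_of_le_of_lt (Nat.sub_le _ _) r.isLt⟩

@[simp] lemma pred'_val (n : ℕ) (r : Fin n) : (pred' n r : ℕ) = (r : ℕ) - 1 := rfl

lemma swap_fix (n : ℕ) (q r : Fin n) (h1 : 1 ≤ (r : ℕ))
    (hq1 : (q : ℕ) ≠ (r : ℕ)) (hq2 : (q : ℕ) + 1 ≠ (r : ℕ)) :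
    Equiv.swap (pred' n r) r q = q := by
  apply Equiv.swap_apply_of_ne_of_ne
  · intro h
    rw [Fin.ext_iff] at h
    simp only [pred'_val] at h
    omega
  · intro h
    rw [Fin.ext_iff] at h
    exact hq1 h

lemma key_sum (n : ℕ) (hn : 2 ≤ n) (q : Fin n) :
    (∑ r : Fin n, if 1 ≤ (r : ℕ) then
        Wr n (((Equiv.swap (pred' n r) r q : Fin n) : ℕ) : ℝ) - Wr n ((q : ℕ) : ℝ)
      else 0)
      = (2 * Real.cos (Real.pi / n) - 2) * Wr n ((q : ℕ) : ℝ) := by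
  have hn0 : (n : ℝ) ≠ 0 := by positivity
  have hqlt : (q : ℕ) < n := q.isLt
  by_cases hq0 : (q : ℕ) = 0
  · -- q at left end
    have hone : ((⟨1, by omega⟩ : Fin n) : ℕ) = 1 := rfl
    have hsum : (∑ r : Fin n, if 1 ≤ (r : ℕ) then
        Wr n (((Equiv.swap (pred' n r) r q : Fin n) : ℕ) : ℝ) - Wr n ((q : ℕ) : ℝ)
      else 0) = Wr n 1 - Wr n 0 := by
      rw [Finset.sum_eq_single (⟨1, by omega⟩ : Fin n)]
      · rw [if_pos (by omega)]
        have hpq : q = pred' n ⟨1, by omega⟩ := by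
          rw [Fin.ext_iff]; simp [hq0]
        rw [hpq, Equiv.swap_apply_left]
        norm_num [← hpq, hq0]
      · intro r _ hr
        by_cases h1r : 1 ≤ (r : ℕ)
        · rw [if_pos h1r, swap_fix n q r h1r (by omega)
            (by intro h; exact hr (by rw [Fin.ext_iff]; omega)), sub_self]
        · rw [if_neg h1r]
      · intro h; exact absurd (Finset.mem_univ _) h
    rw [hsum, hq0]
    have hrec := Wr_rec n hn0 0
    have hneg := Wr_neg_one n
    norm_num at hrec ⊢
    linarith
  · by_cases hqn : (q : ℕ) = n - 1
    · -- q at right end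
      have hq1 : 1 ≤ (q : ℕ) := by omega
      have hsum : (∑ r : Fin n, if 1 ≤ (r : ℕ) then
          Wr n (((Equiv.swap (pred' n r) r q : Fin n) : ℕ) : ℝ) - Wr n ((q : ℕ) : ℝ)
        else 0) = Wr n (((n : ℝ) - 1) - 1) - Wr n ((n : ℝ) - 1) := by
        rw [Finset.sum_eq_single q]
        · rw [if_pos hq1, Equiv.swap_apply_right]
          have h1 : ((pred' n q : Fin n) : ℕ) = n - 2 := by simp [hqn]; omega
          have h2 : (((pred' n q : Fin n) : ℕ) : ℝ) = ((n : ℝ) - 1) - 1 := by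
            rw [h1]; push_cast [Nat.cast_sub (by omega : 2 ≤ n)]; ring
          have h3 : (((q : ℕ) : ℕ) : ℝ) = (n : ℝ) - 1 := by
            rw [hqn]; push_cast [Nat.cast_sub (by omega : 1 ≤ n)]; ring
          rw [h2]; norm_num [h3]
        · intro r _ hr
          by_cases h1r : 1 ≤ (r : ℕ)
          · rw [if_pos h1r, swap_fix n q r h1r
              (by intro h; exact hr (by rw [Fin.ext_iff]; omega))
              (by omega), sub_self]
          · rw [if_neg h1r]
        · intro h; exact absurd (Finset.mem_univ _) h
      have h3 : (((q : ℕ)) : ℝ) = (n : ℝ) - 1 := by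
        rw [hqn]; push_cast [Nat.cast_sub (by omega : 1 ≤ n)]; ring
      rw [hsum, h3]
      have hrec := Wr_rec n hn0 ((n : ℝ) - 1)
      have htop := Wr_top n hn0
      linarith
    · -- interior
      have hq1 : 1 ≤ (q : ℕ) := by omega
      have hqn2 : (q : ℕ) + 1 < n := by omega
      set b : Fin n := ⟨(q : ℕ) + 1, hqn2⟩ with hb
      have hqb : q ≠ b := by
        intro h; rw [Fin.ext_iff] at h; simp [hb] at h
      have hsum : (∑ r : Fin n, if 1 ≤ (r : ℕ) then
          Wr n (((Equiv.swap (pred' n r) r q : Fin n) : ℕ) : ℝ) - Wr n ((q : ℕ) : ℝ)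
        else 0) =
          (Wr n (((q : ℕ) : ℝ) - 1) - Wr n ((q : ℕ) : ℝ)) +
          (Wr n (((q : ℕ) : ℝ) + 1) - Wr n ((q : ℕ) : ℝ)) := by
        rw [← Finset.sum_subset (Finset.subset_univ {q, b}) ?hzero]
        · rw [Finset.sum_pair hqb]
          congr 1
          · rw [if_pos hq1, Equiv.swap_apply_right]
            have h2 : (((pred' n q : Fin n) : ℕ) : ℝ) = ((q : ℕ) : ℝ) - 1 := by
              simp only [pred'_val]
              push_cast [Nat.cast_sub hq1]
              ring
            rw [h2]
          · have h1b : 1 ≤ (b : ℕ) := by simp [hb]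
            rw [if_pos h1b]
            have hpb : q = pred' n b := by rw [Fin.ext_iff]; simp [hb]
            have hsw : Equiv.swap (pred' n b) b q = b := by
              rw [hpb]; exact Equiv.swap_apply_left _ _
            have h2 : (((b : Fin n) : ℕ) : ℝ) = ((q : ℕ) : ℝ) + 1 := by
              simp [hb]
            rw [hsw, h2]
        · intro r _ hr
          simp only [Finset.mem_insert, Finset.mem_singleton, not_or] at hr
          by_cases h1r : 1 ≤ (r : ℕ)
          · rw [if_pos h1r, swap_fix n q r h1r
              (by intro h; exact hr.1 (by rw [Fin.ext_iff]; omega))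
              (by intro h; exact hr.2 (by rw [Fin.ext_iff]; simp [hb]; omega)), sub_self]
          · rw [if_neg h1r]
      rw [hsum]
      have hrec := Wr_rec n hn0 ((q : ℕ) : ℝ)
      linarith

lemma Koff_def (n : ℕ) (p : Fin n → Fin n → ℝ) (x y : Equiv.Perm (Fin n)) :
    Koff n p x y = ∑ r : Fin n,
      if 1 ≤ (r : ℕ) ∧ y = x * Equiv.swap (pred' n r) r
      then p (x r) (x (pred' n r)) / ((n : ℝ) - 1) else 0 := rfl

lemma mulVec_fvec (n : ℕ) (hn : 2 ≤ n) (p : Fin n → Fin n → ℝ)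
    (hp : ∀ i j : Fin n, i ≠ j → p i j = 1 / 2) (i : Fin n) (x : Equiv.Perm (Fin n)) :
    (Kmat n p).mulVec (fvec n i) x
      = (1 - (1 - Real.cos (Real.pi / n)) / ((n : ℝ) - 1)) * fvec n i x := by
  classical
  have hn1 : (n : ℝ) - 1 ≠ 0 := by
    have : (2 : ℝ) ≤ n := by exact_mod_cast hn
    linarith
  have hmv : (Kmat n p).mulVec (fvec n i) x = ∑ y, Kmat n p x y * fvec n i y := by
    simp [Matrix.mulVec, dotProduct]
  have hstep : ∑ y, Kmat n p x y * fvec n i y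
      = fvec n i x + ∑ y, Koff n p x y * (fvec n i y - fvec n i x) := by
    have e1 : ∑ y, Kmat n p x y * fvec n i y
        = (∑ y ∈ Finset.univ.erase x, Koff n p x y * fvec n i y)
          + (1 - ∑ z ∈ Finset.univ.erase x, Koff n p x z) * fvec n i x := by
      rw [← Finset.sum_erase_add _ _ (Finset.mem_univ x)]
      congr 1
      · refine Finset.sum_congr rfl fun y hy => ?_
        have hxy : ¬ (x = y) := fun h => (Finset.mem_erase.mp hy).1 h.symm
        simp [Kmat, hxy]
      · simp [Kmat]
    have e2 : ∑ y, Koff n p x y * (fvec n i y - fvec n i x)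
        = ∑ y ∈ Finset.univ.erase x, Koff n p x y * (fvec n i y - fvec n i x) := by
      rw [← Finset.sum_erase_add _ _ (Finset.mem_univ x)]; simp
    rw [e1, e2]
    simp only [mul_sub]
    rw [Finset.sum_sub_distrib, sub_mul, one_mul, Finset.sum_mul]
    ring
  have hswap : ∀ r : Fin n,
      fvec n i (x * Equiv.swap (pred' n r) r)
        = Wr n (((Equiv.swap (pred' n r) r (x.symm i) : Fin n) : ℕ) : ℝ) := by
    intro r
    rw [fvec_eq]
    congr 3
  have hC : ∑ y, Koff n p x y * (fvec n i y - fvec n i x)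
      = ∑ r : Fin n, (if 1 ≤ (r : ℕ) then
          (1 / (2 * ((n : ℝ) - 1))) *
            (Wr n (((Equiv.swap (pred' n r) r (x.symm i) : Fin n) : ℕ) : ℝ)
              - Wr n (((x.symm i : Fin n) : ℕ) : ℝ))
        else 0) := by
    simp only [Koff_def, Finset.sum_mul]
    rw [Finset.sum_comm]
    refine Finset.sum_congr rfl fun r _ => ?_
    by_cases h1r : 1 ≤ (r : ℕ)
    · rw [if_pos h1r]
      have hne : x r ≠ x (pred' n r) := by
        intro h
        have := x.injective h
        rw [Fin.ext_iff] at this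
        simp only [pred'_val] at this
        omega
      have hval : p (x r) (x (pred' n r)) = 1 / 2 := hp _ _ hne
      simp only [h1r, true_and, ite_mul, zero_mul]
      rw [Finset.sum_ite_eq' Finset.univ (x * Equiv.swap (pred' n r) r)]
      rw [if_pos (Finset.mem_univ _), hval, hswap r, fvec_eq]
      rw [div_div]
    · rw [if_neg h1r]
      simp [h1r]
  rw [hmv, hstep, hC]
  have hpull : ∀ r : Fin n, (if 1 ≤ (r : ℕ) then
          (1 / (2 * ((n : ℝ) - 1))) *
            (Wr n (((Equiv.swap (pred' n r) r (x.symm i) : Fin n) : ℕ) : ℝ)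
              - Wr n (((x.symm i : Fin n) : ℕ) : ℝ))
        else 0)
      = (1 / (2 * ((n : ℝ) - 1))) * (if 1 ≤ (r : ℕ) then
          (Wr n (((Equiv.swap (pred' n r) r (x.symm i) : Fin n) : ℕ) : ℝ)
              - Wr n (((x.symm i : Fin n) : ℕ) : ℝ)) else 0) := by
    intro r; split <;> simp
  rw [Finset.sum_congr rfl fun r _ => hpull r, ← Finset.mul_sum,
    key_sum n hn (x.symm i), fvec_eq]
  field_simp
  ring

lemma sum_fvec (n : ℕ) (hn : 2 ≤ n) : ∑ i : Fin n, fvec n i = 0 := by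
  have hn0 : (n : ℝ) ≠ 0 := by positivity
  funext x
  rw [Finset.sum_apply]
  have step1 : ∑ i : Fin n, fvec n i x = ∑ q : Fin n, Wr n ((q : ℕ) : ℝ) := by
    rw [Finset.sum_congr rfl fun i _ => fvec_eq n i x]
    exact Equiv.sum_comp x.symm (fun q : Fin n => Wr n ((q : ℕ) : ℝ))
  rw [step1]
  have hpair : ∀ a : Fin n,
      Wr n ((a : ℕ) : ℝ) + Wr n (((⟨n - 1 - (a : ℕ), by omega⟩ : Fin n) : ℕ) : ℝ) = 0 := by
    intro a
    have hc : (((⟨n - 1 - (a : ℕ), by omega⟩ : Fin n) : ℕ) : ℝ) = (n : ℝ) - 1 - (a : ℕ) := by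
      simp only []
      push_cast [Nat.cast_sub (by omega : (a : ℕ) ≤ n - 1), Nat.cast_sub (by omega : 1 ≤ n)]
      ring
    rw [hc]
    unfold Wr
    have harg : (2 * ((n : ℝ) - 1 - (a : ℕ)) + 1) * Real.pi / (2 * n)
        = Real.pi - (2 * ((a : ℕ) : ℝ) + 1) * Real.pi / (2 * n) := by
      field_simp; ring
    rw [harg, Real.cos_pi_sub]
    ring
  refine Finset.sum_ninvolution (fun a : Fin n => ⟨n - 1 - (a : ℕ), by omega⟩)
    hpair (fun a hfa h => ?_) (fun a => Finset.mem_univ _) (fun a => ?_)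
  · apply hfa
    have h' : (⟨n - 1 - (a : ℕ), by omega⟩ : Fin n) = a := h
    have h1 := hpair a
    rw [h'] at h1
    linarith
  · rw [Fin.ext_iff]
    simp only []
    omega

lemma Wr_lt (n : ℕ) (hn : 2 ≤ n) : Wr n 1 < Wr n 0 := by
  have hπ := Real.pi_pos
  have hnR : (2 : ℝ) ≤ n := by exact_mod_cast hn
  unfold Wr
  apply Real.cos_lt_cos_of_nonneg_of_le_pi
  · positivity
  · rw [div_le_iff₀ (by positivity)]
    nlinarith
  · rw [div_lt_div_iff₀ (by positivity) (by positivity)]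
    nlinarith

lemma fvec_li (n : ℕ) (hn : 2 ≤ n) (i₀ : Fin n) :
    LinearIndependent ℝ (fun i : {i : Fin n // i ≠ i₀} => fvec n (i : Fin n)) := by
  classical
  have hW := Wr_lt n hn
  rw [Fintype.linearIndependent_iff]
  intro g hg
  set G : Fin n → ℝ := fun i => if h : i = i₀ then 0 else g ⟨i, h⟩ with hG
  have hGsum : ∑ i : Fin n, G i • fvec n i = 0 := by
    rw [← Finset.sum_erase_add _ _ (Finset.mem_univ i₀)]
    have h0 : G i₀ • fvec n i₀ = 0 := by simp [hG]
    rw [h0, add_zero]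
    rw [Finset.sum_subtype (p := fun i => i ≠ i₀) _ (by simp)
      (fun i => G i • fvec n i)]
    have hcg : ∀ a : {i : Fin n // i ≠ i₀},
        G (a : Fin n) • fvec n (a : Fin n) = g a • fvec n (a : Fin n) := by
      intro a; rw [hG]; simp [a.prop]
    rw [Finset.sum_congr rfl fun a _ => hcg a]
    exact hg
  have hpair : ∀ a b : Fin n, a ≠ b → G a = G b := by
    intro a b hab
    set z0 : Fin n := ⟨0, by omega⟩ with hz0
    set z1 : Fin n := ⟨1, by omega⟩ with hz1
    have h01 : z0 ≠ z1 := by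
      intro h; rw [Fin.ext_iff] at h; simp [hz0, hz1] at h
    set τ := Equiv.swap z0 a with hτ
    have hτb0 : z0 ≠ τ b := by
      intro h
      have h2 : τ z0 = τ (τ b) := congrArg τ h
      rw [Equiv.swap_apply_self, hτ, Equiv.swap_apply_left] at h2
      exact hab h2
    set σ := τ * Equiv.swap z1 (τ b) with hσ
    have hσ0 : σ z0 = a := by
      rw [hσ, Equiv.Perm.mul_apply, Equiv.swap_apply_of_ne_of_ne h01 hτb0, hτ,
        Equiv.swap_apply_left]
    have hσ1 : σ z1 = b := by
      rw [hσ, Equiv.Perm.mul_apply, Equiv.swap_apply_left, hτ, Equiv.swap_apply_self]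
    have hsa : σ.symm a = z0 := by rw [← hσ0, Equiv.symm_apply_apply]
    have hsb : σ.symm b = z1 := by rw [← hσ1, Equiv.symm_apply_apply]
    set σ' := σ * Equiv.swap z0 z1 with hσ'
    have hsym : ∀ k, σ'.symm k = Equiv.swap z0 z1 (σ.symm k) := by
      intro k
      rw [hσ', Equiv.Perm.mul_def, Equiv.symm_trans_apply, Equiv.symm_swap]
    have e1 : ∑ k : Fin n, G k * (fvec n k σ - fvec n k σ') = 0 := by
      have h1 := congrFun hGsum σ
      have h2 := congrFun hGsum σ'
      simp only [Finset.sum_apply, Pi.smul_apply, smul_eq_mul, Pi.zero_apply] at h1 h2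
      simp only [mul_sub, Finset.sum_sub_distrib, h1, h2, sub_zero]
    have e2 : ∑ k : Fin n, G k * (fvec n k σ - fvec n k σ')
        = G a * (fvec n a σ - fvec n a σ') + G b * (fvec n b σ - fvec n b σ') := by
      rw [← Finset.sum_subset (Finset.subset_univ {a, b}) ?_, Finset.sum_pair hab]
      intro k _ hk
      simp only [Finset.mem_insert, Finset.mem_singleton, not_or] at hk
      have hfix : Equiv.swap z0 z1 (σ.symm k) = σ.symm k := by
        apply Equiv.swap_apply_of_ne_of_ne
        · intro h
          apply hk.1
          have := congrArg σ h
          rw [Equiv.apply_symm_apply, hσ0] at this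
          exact this
        · intro h
          apply hk.2
          have := congrArg σ h
          rw [Equiv.apply_symm_apply, hσ1] at this
          exact this
      rw [fvec_eq, fvec_eq, hsym k, hfix, sub_self, mul_zero]
    have hva : fvec n a σ = Wr n 0 := by
      rw [fvec_eq, hsa]; norm_num [hz0]
    have hva' : fvec n a σ' = Wr n 1 := by
      rw [fvec_eq, hsym, hsa, Equiv.swap_apply_left]; norm_num [hz1]
    have hvb : fvec n b σ = Wr n 1 := by
      rw [fvec_eq, hsb]; norm_num [hz1]
    have hvb' : fvec n b σ' = Wr n 0 := by
      rw [fvec_eq, hsym, hsb, Equiv.swap_apply_right]; norm_num [hz0]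
    rw [e2, hva, hva', hvb, hvb'] at e1
    have e3 : (G a - G b) * (Wr n 0 - Wr n 1) = 0 := by linarith [e1]
    rcases mul_eq_zero.mp e3 with h | h
    · linarith [sub_eq_zero.mp h]
    · linarith
  intro j
  have hj : g j = G (j : Fin n) := by rw [hG]; simp [j.prop]
  rw [hj, hpair j i₀ j.prop, hG]
  simp

/-- in the unweighted case, the eigenvalue `β = 1 - (1 - cos(π/n))/(n-1)`
of `K` has multiplicity at least `n - 1`.  Specifically, the `n` eigenvectors
`f_1, ..., f_n` satisfy `f_1 + ⋯ + f_n = 0`, while any `n - 1` of them are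
linearly independent. -/
theorem second_eigenvalue_multiplicity (n : ℕ) (hn : 2 ≤ n) (p : Fin n → Fin n → ℝ)
    (hp : ∀ i j : Fin n, i ≠ j → p i j = 1 / 2) :
    (∀ i : Fin n, (Kmat n p).mulVec (fvec n i) =
      (1 - (1 - Real.cos (Real.pi / n)) / ((n : ℝ) - 1)) • fvec n i) ∧
    (∑ i : Fin n, fvec n i) = 0 ∧
    (∀ i₀ : Fin n,
      LinearIndependent ℝ (fun i : {i : Fin n // i ≠ i₀} => fvec n (i : Fin n))) ∧
    n - 1 ≤ Module.finrank ℝ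
      (Module.End.eigenspace ((Kmat n p).mulVecLin)
        (1 - (1 - Real.cos (Real.pi / n)) / ((n : ℝ) - 1))) := by
  classical
  have hn0 : 0 < n := by omega
  have heig : ∀ i : Fin n, (Kmat n p).mulVec (fvec n i) =
      (1 - (1 - Real.cos (Real.pi / n)) / ((n : ℝ) - 1)) • fvec n i := by
    intro i
    funext x
    rw [Pi.smul_apply, smul_eq_mul]
    exact mulVec_fvec n hn p hp i x
  refine ⟨heig, sum_fvec n hn, fun i₀ => fvec_li n hn i₀, ?_⟩
  set β := (1 - (1 - Real.cos (Real.pi / n)) / ((n : ℝ) - 1)) with hβ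
  set E := Module.End.eigenspace ((Kmat n p).mulVecLin) β with hE
  have hmem : ∀ i : Fin n, fvec n i ∈ E := by
    intro i
    rw [hE, Module.End.mem_eigenspace_iff, Matrix.mulVecLin_apply]
    exact heig i
  set i₀ : Fin n := ⟨0, hn0⟩ with hi₀
  set F : {i : Fin n // i ≠ i₀} → E := fun i => ⟨fvec n (i : Fin n), hmem i⟩ with hF
  have hli : LinearIndependent ℝ F := by
    apply LinearIndependent.of_comp E.subtype
    have hcomp : (E.subtype ∘ F) = fun i : {i : Fin n // i ≠ i₀} => fvec n (i : Fin n) := rfl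
    rw [hcomp]
    exact fvec_li n hn i₀
  have hcard := hli.fintype_card_le_finrank
  have hcard2 : Fintype.card {i : Fin n // i ≠ i₀} = n - 1 := by
    simpa [Fintype.card_subtype_eq] using
      Fintype.card_subtype_compl (fun i : Fin n => i = i₀)
  rw [hcard2] at hcard
  exact hcard
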